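/- Fix d ∈ ℕ, t ≥ 0, Δt > 0, γ ∈ (0, 1) and B > 0, and set σ² = (t+(1+γ)Δt)² − t² and λ(γ) = 2Q(B/(2σ)) (with σ = √((t+(1+γ)Δt)² − t²)). Let μ and ν be Borel probability measures on ℝ^d whose supports are contained in the closed ball of radius B/2 centered at the origin, let φ = N(0, σ²I_d), and let T : ℝ^d → ℝ^d be any Borel measurable map (the deterministic backward-ODE map). Then TV(T_*(μ * φ), T_*(ν * φ)) ≤ (1 − λ(γ))·TV(μ, ν). -/

import Mathlib

open MeasureTheory

noncomputable section

/-- Total variation distance between two measures: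
`TV(μ, ν) = sup over Borel sets A of |μ(A) − ν(A)|`. -/
def tvDist {E : Type*} [MeasurableSpace E] (μ ν : Measure E) : ℝ :=
  ⨆ A : {A : Set E // MeasurableSet A}, |(μ A.1).toReal - (ν A.1).toReal|

/-- `π` is a coupling of `μ` and `ν`. -/
def IsCoupling {E : Type*} [MeasurableSpace E] (π : Measure (E × E)) (μ ν : Measure E) : Prop :=
  π.map Prod.fst = μ ∧ π.map Prod.snd = ν

/-- Wasserstein-1 distance: infimum over couplings of `∫ ‖x − y‖ dπ`. -/
def W1 {E : Type*} [MeasurableSpace E] [NormedAddCommGroup E] (μ ν : Measure E) : ℝ :=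
  sInf {r : ℝ | ∃ π : Measure (E × E), IsProbabilityMeasure π ∧ IsCoupling π μ ν ∧
    r = ∫ p, ‖p.1 - p.2‖ ∂π}

/-- The isotropic Gaussian measure `N(m, σ²I_d)` on `ℝ^d`, given by its Lebesgue density. -/
def gaussianE (d : ℕ) (m : EuclideanSpace ℝ (Fin d)) (σ2 : ℝ) :
    Measure (EuclideanSpace ℝ (Fin d)) :=
  volume.withDensity fun x =>
    ENNReal.ofReal ((2 * Real.pi * σ2) ^ (-(d : ℝ) / 2) * Real.exp (-‖x - m‖ ^ 2 / (2 * σ2)))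

/-- Standard Gaussian tail function `Q(r) = P(a ≥ r)` for `a ~ N(0,1)`. -/
def gaussQ (r : ℝ) : ℝ := (ProbabilityTheory.gaussianReal 0 1 (Set.Ici r)).toReal

/-- Standard normal cumulative distribution function `Φ`. -/
def stdCDF (r : ℝ) : ℝ := (ProbabilityTheory.gaussianReal 0 1 (Set.Iic r)).toReal

/-- The (topological) support of a measure: points all of whose neighborhoods
have positive measure. -/
def msupport {E : Type*} [TopologicalSpace E] [MeasurableSpace E] (μ : Measure E) : Set E :=
  {x | ∀ U ∈ nhds x, μ U ≠ 0}


open Set ProbabilityTheory ENNReal NNReal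

section TV
variable {α : Type*} [MeasurableSpace α] (μ ν : Measure α)

lemma tvDist_nonneg : 0 ≤ tvDist μ ν :=
  Real.iSup_nonneg fun _ => abs_nonneg _

variable [IsProbabilityMeasure μ] [IsProbabilityMeasure ν]

lemma tv_bddAbove :
    BddAbove (Set.range fun A : {A : Set α // MeasurableSet A} =>
      |(μ A.1).toReal - (ν A.1).toReal|) := by
  refine ⟨1, ?_⟩
  rintro x ⟨A, rfl⟩
  have h1 : (μ A.1).toReal ≤ 1 := by
    simpa using ENNReal.toReal_mono (by simp) (prob_le_one (μ := μ) (s := A.1))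
  have h2 : (ν A.1).toReal ≤ 1 := by
    simpa using ENNReal.toReal_mono (by simp) (prob_le_one (μ := ν) (s := A.1))
  rw [abs_sub_le_iff]
  constructor <;> nlinarith [ENNReal.toReal_nonneg (a := μ A.1), ENNReal.toReal_nonneg (a := ν A.1)]

lemma le_tvDist {A : Set α} (hA : MeasurableSet A) :
    (μ A).toReal - (ν A).toReal ≤ tvDist μ ν :=
  le_trans (le_abs_self _) (le_ciSup (tv_bddAbove μ ν) ⟨A, hA⟩)

omit [IsProbabilityMeasure μ] [IsProbabilityMeasure ν] in
lemma tvDist_le {c : ℝ}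
    (h : ∀ A : Set α, MeasurableSet A → |(μ A).toReal - (ν A).toReal| ≤ c) :
    tvDist μ ν ≤ c :=
  ciSup_le fun A => h A.1 A.2

end TV

section Support

variable {α : Type*} [MeasurableSpace α] [TopologicalSpace α] [OpensMeasurableSpace α]
  [SecondCountableTopology α]

lemma measure_msupport_compl (μ : Measure α) : μ (msupport μ)ᶜ = 0 := by
  have h : (msupport μ)ᶜ ⊆ ⋃ U : {U : Set α // IsOpen U ∧ μ U = 0}, (U : Set α) := by
    intro x hx
    simp only [msupport, mem_compl_iff, mem_setOf_eq, not_forall] at hx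
    obtain ⟨V, hV, hV0⟩ := hx
    obtain ⟨W, hWV, hW, hxW⟩ := mem_nhds_iff.mp hV
    refine mem_iUnion.mpr ⟨⟨W, hW, ?_⟩, hxW⟩
    · have : ¬ μ V ≠ 0 := hV0
      push_neg at this
      exact measure_mono_null hWV this
  refine measure_mono_null h ?_
  obtain ⟨t, htc, htU⟩ := TopologicalSpace.isOpen_iUnion_countable
    (fun U : {U : Set α // IsOpen U ∧ μ U = 0} => (U : Set α)) (fun U => U.2.1)
  rw [← htU]
  exact (measure_biUnion_null_iff htc).mpr fun U _ => U.2.2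

end Support

lemma lintegral_pi_prod : ∀ {n : ℕ} (f : Fin n → ℝ → ℝ≥0∞), (∀ i, Measurable (f i)) →
    ∫⁻ x : Fin n → ℝ, ∏ i, f i (x i) ∂(Measure.pi fun _ => (volume : Measure ℝ))
      = ∏ i, ∫⁻ y, f i y := by
  intro n
  induction n with
  | zero =>
      intro f hf
      simp [lintegral_const, Measure.pi_univ]
  | succ n ih =>
      intro f hf
      have hmp := (measurePreserving_piFinSuccAbove (fun _ : Fin (n+1) => (volume : Measure ℝ)) 0)
      set e := MeasurableEquiv.piFinSuccAbove (fun _ : Fin (n+1) => ℝ) 0 with he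
      set g : ℝ × (Fin n → ℝ) → ℝ≥0∞ := fun p => f 0 p.1 * ∏ j : Fin n, f (Fin.succ j) (p.2 j)
          with hg
      have hgm : Measurable g :=
        ((hf 0).comp measurable_fst).mul
          (Finset.measurable_prod _ fun j _ => (hf _).comp ((measurable_pi_apply j).comp
            measurable_snd))
      have key : ∀ x : Fin (n+1) → ℝ, ∏ i, f i (x i) = g (e x) := by
        intro x
        rw [Fin.prod_univ_succ]
        rfl
      calc ∫⁻ x : Fin (n+1) → ℝ, ∏ i, f i (x i) ∂(Measure.pi fun _ => (volume : Measure ℝ))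
          = ∫⁻ x, g (e x) ∂(Measure.pi fun _ => (volume : Measure ℝ)) :=
            lintegral_congr fun x => key x
        _ = ∫⁻ p, g p ∂((volume : Measure ℝ).prod (Measure.pi fun _ : Fin n => volume)) :=
            hmp.lintegral_comp hgm
        _ = (∫⁻ y, f 0 y) * ∫⁻ x : Fin n → ℝ, ∏ j, f (Fin.succ j) (x j)
              ∂(Measure.pi fun _ => (volume : Measure ℝ)) :=
            lintegral_prod_mul (hf 0).aemeasurable
              (Finset.measurable_prod _ fun j _ =>
                (hf _).comp (measurable_pi_apply j)).aemeasurable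
        _ = ∏ i, ∫⁻ y, f i y := by
            rw [ih _ fun j => hf _, Fin.prod_univ_succ]

lemma gaussQ_nonneg (r : ℝ) : 0 ≤ gaussQ r := ENNReal.toReal_nonneg

lemma gaussQ_antitone : Antitone gaussQ := by
  intro r s hrs
  exact ENNReal.toReal_mono (measure_ne_top _ _) (measure_mono (Set.Ici_subset_Ici.mpr hrs))

lemma gaussianReal_singleton {m : ℝ} {v : ℝ≥0} (hv : v ≠ 0) (c : ℝ) :
    gaussianReal m v {c} = 0 := by
  rw [gaussianReal_of_var_ne_zero _ hv]
  exact withDensity_absolutelyContinuous volume _ Real.volume_singleton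

lemma gaussianReal_std_map_neg : (gaussianReal 0 1).map (fun y : ℝ => -y) = gaussianReal 0 1 := by
  have h := gaussianReal_map_const_mul (μ := 0) (v := 1) (-1)
  have he : (fun y : ℝ => -1 * y) = fun y : ℝ => -y := by funext y; ring
  rw [he] at h
  rw [h]
  congr 1
  · ring
  · ext
    simp

lemma gaussQ_neg (r : ℝ) : gaussQ (-r) = 1 - gaussQ r := by
  have h1 : gaussianReal 0 1 (Ici (-r)) = gaussianReal 0 1 (Iic r) := by
    have := Measure.map_apply (f := fun y : ℝ => -y) (μ := gaussianReal 0 1)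
      (measurable_neg) (measurableSet_Iic (a := r))
    rw [gaussianReal_std_map_neg] at this
    rw [this]
    congr 1
    ext y
    simp [neg_le, le_neg]
  have h2 : gaussianReal 0 1 (Iic r) + gaussianReal 0 1 (Ioi r) = 1 := by
    rw [← measure_union (by simp [Set.disjoint_left]) measurableSet_Ioi,
      Set.Iic_union_Ioi, measure_univ]
  have h3 : gaussianReal 0 1 (Ici r) = gaussianReal 0 1 (Ioi r) := by
    have : Ici r = Ioi r ∪ {r} := by
      ext z
      simp only [Set.mem_Ici, Set.mem_union, Set.mem_Ioi, Set.mem_singleton_iff]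
      constructor
      · intro h; rcases lt_or_eq_of_le h with h | h
        · exact Or.inl h
        · exact Or.inr h.symm
      · rintro (h | rfl); exacts [h.le, le_rfl]
    rw [this, measure_union (by simp) (measurableSet_singleton _),
      gaussianReal_singleton one_ne_zero, add_zero]
  have hne : gaussianReal 0 1 (Iic r) ≠ ⊤ := measure_ne_top _ _
  have hne2 : gaussianReal 0 1 (Ioi r) ≠ ⊤ := measure_ne_top _ _
  unfold gaussQ
  rw [h1, h3]
  have := ENNReal.toReal_add hne hne2
  rw [h2] at this
  simp only [ENNReal.toReal_one] at this
  linarith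

lemma gaussQ_le_half {r : ℝ} (hr : 0 ≤ r) : gaussQ r ≤ 1 / 2 := by
  have h0 : gaussQ 0 = 1 / 2 := by
    have := gaussQ_neg 0
    rw [neg_zero] at this
    linarith
  calc gaussQ r ≤ gaussQ 0 := gaussQ_antitone hr
    _ = 1 / 2 := h0

lemma gaussianReal_Ici_toReal {mμ c σ2 : ℝ} (hσ2 : 0 < σ2) :
    (gaussianReal mμ σ2.toNNReal (Ici c)).toReal = gaussQ ((c - mμ) / Real.sqrt σ2) := by
  have hσ : 0 < Real.sqrt σ2 := Real.sqrt_pos.mpr hσ2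
  have hmap : gaussianReal mμ σ2.toNNReal
      = (gaussianReal 0 1).map (fun y => Real.sqrt σ2 * y + mμ) := by
    have h1 : (gaussianReal 0 1).map (fun y => Real.sqrt σ2 * y)
        = gaussianReal 0 σ2.toNNReal := by
      have := gaussianReal_map_const_mul (μ := 0) (v := 1) (Real.sqrt σ2)
      rw [show (fun y : ℝ => Real.sqrt σ2 * y) = (Real.sqrt σ2 * ·) from rfl, this]
      congr 1
      · ring
      · ext
        simp only [NNReal.coe_mul, NNReal.coe_mk, NNReal.coe_one, mul_one, Real.coe_toNNReal',
          Real.sq_sqrt hσ2.le, max_eq_left hσ2.le]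
    have h2 : ((gaussianReal 0 σ2.toNNReal).map (· + mμ)) = gaussianReal mμ σ2.toNNReal := by
      rw [gaussianReal_map_add_const, zero_add]
    rw [← h2, ← h1, Measure.map_map (measurable_id'.add_const mμ)
      (measurable_const_mul _)]
    rfl
  rw [hmap, Measure.map_apply (by fun_prop) measurableSet_Ici]
  have hpre : (fun y => Real.sqrt σ2 * y + mμ) ⁻¹' Ici c = Ici ((c - mμ) / Real.sqrt σ2) := by
    ext y
    simp only [Set.mem_preimage, Set.mem_Ici]
    rw [div_le_iff₀ hσ, sub_le_iff_le_add, mul_comm]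
  rw [hpre]
  rfl

lemma gauss_density_prod {d : ℕ} {σ2 : ℝ} (hσ2 : 0 < σ2) (m x : EuclideanSpace ℝ (Fin d)) :
    ENNReal.ofReal ((2 * Real.pi * σ2) ^ (-(d : ℝ) / 2) * Real.exp (-‖x - m‖ ^ 2 / (2 * σ2)))
      = ∏ i, gaussianPDF (m i) σ2.toNNReal (x i) := by
  have hpos : (0:ℝ) < 2 * Real.pi * σ2 := by positivity
  have hc : (2 * Real.pi * σ2) ^ (-(d : ℝ) / 2)
      = ∏ _i : Fin d, (Real.sqrt (2 * Real.pi * σ2))⁻¹ := by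
    rw [Finset.prod_const, Finset.card_univ, Fintype.card_fin]
    have h1 : (Real.sqrt (2 * Real.pi * σ2))⁻¹ = (2 * Real.pi * σ2) ^ (-(1:ℝ)/2) := by
      rw [neg_div, Real.rpow_neg hpos.le, Real.sqrt_eq_rpow]
    rw [h1, ← Real.rpow_natCast ((2 * Real.pi * σ2) ^ (-(1:ℝ)/2)) d, ← Real.rpow_mul hpos.le]
    congr 1
    ring
  have hnorm : ‖x - m‖ ^ 2 = ∑ i, (x i - m i) ^ 2 := by
    rw [EuclideanSpace.norm_eq]
    rw [Real.sq_sqrt (by positivity)]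
    refine Finset.sum_congr rfl fun i _ => ?_
    rw [Real.norm_eq_abs, sq_abs]
    congr 1
  have he : Real.exp (-‖x - m‖ ^ 2 / (2 * σ2))
      = ∏ i, Real.exp (-(x i - m i) ^ 2 / (2 * σ2)) := by
    rw [← Real.exp_sum, hnorm]
    congr 1
    rw [← Finset.sum_div, ← Finset.sum_neg_distrib]
  rw [hc, he, ← Finset.prod_mul_distrib,
    ENNReal.ofReal_prod_of_nonneg (fun i _ => by positivity)]
  refine Finset.prod_congr rfl fun i _ => ?_
  unfold gaussianPDF gaussianPDFReal
  rw [Real.coe_toNNReal _ hσ2.le]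

lemma gaussianE_proj {d : ℕ} {σ2 : ℝ} (hσ2 : 0 < σ2) (m : EuclideanSpace ℝ (Fin d))
    (u : EuclideanSpace ℝ (Fin d)) (hu : ‖u‖ = 1) {A : Set ℝ} (hA : MeasurableSet A) :
    gaussianE d m σ2 {z | (inner ℝ u z) ∈ A} = gaussianReal (inner ℝ u m) σ2.toNNReal A := by
  have hd : 0 < d := by
    rcases Nat.eq_zero_or_pos d with h | h
    · subst h
      have : u = 0 := Subsingleton.elim u 0
      rw [this, norm_zero] at hu; norm_num at hu
    · exact h
  haveI : NeZero d := ⟨hd.ne'⟩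
  have hσ' : σ2.toNNReal ≠ 0 := by
    simp [Real.toNNReal_eq_zero, not_le, hσ2]
  -- orthonormal basis with b 0 = u
  obtain ⟨b, hb⟩ :=
    Orthonormal.exists_orthonormalBasis_extension_of_card_eq (𝕜 := ℝ)
      (E := EuclideanSpace ℝ (Fin d))
      (by simp) (v := fun _ : Fin d => u) (s := {(0 : Fin d)})
      ⟨fun i => by simpa using hu, fun i j hij => absurd (Subsingleton.elim i j) hij⟩
  have hbu : b 0 = u := hb 0 rfl
  set m' : EuclideanSpace ℝ (Fin d) := b.repr m with hm'
  have hW : MeasurableSet {x : EuclideanSpace ℝ (Fin d) | x 0 ∈ A} :=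
    (measurable_pi_apply (0 : Fin d)).comp
      (MeasurableEquiv.toLp 2 (Fin d → ℝ)).symm.measurable hA
  have hset : {z : EuclideanSpace ℝ (Fin d) | (inner ℝ u z) ∈ A}
      = ⇑b.repr ⁻¹' {x : EuclideanSpace ℝ (Fin d) | x 0 ∈ A} := by
    ext z
    simp only [Set.mem_setOf_eq, Set.mem_preimage, OrthonormalBasis.repr_apply_apply, hbu]
  have hemb : MeasurableEmbedding (⇑b.repr) :=
    b.repr.toHomeomorph.measurableEmbedding
  have key : gaussianE d m σ2 {z | (inner ℝ u z) ∈ A}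
      = ∫⁻ x in {x : EuclideanSpace ℝ (Fin d) | x 0 ∈ A},
          (∏ i, gaussianPDF (m' i) σ2.toNNReal (x i)) ∂volume := by
    rw [hset, gaussianE, withDensity_apply _ (hemb.measurable hW)]
    have hdens : ∀ z : EuclideanSpace ℝ (Fin d),
        ENNReal.ofReal
          ((2 * Real.pi * σ2) ^ (-(d : ℝ) / 2) * Real.exp (-‖z - m‖ ^ 2 / (2 * σ2)))
        = ∏ i, gaussianPDF (m' i) σ2.toNNReal (b.repr z i) := by
      intro z
      rw [← gauss_density_prod hσ2 m' (b.repr z)]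
      congr 3
      rw [← LinearIsometryEquiv.map_sub, LinearIsometryEquiv.norm_map]
    rw [setLIntegral_congr_fun (hemb.measurable hW)
      (fun z _ => hdens z)]
    exact b.measurePreserving_repr.setLIntegral_comp_preimage_emb hemb
      (fun x => ∏ i, gaussianPDF (m' i) σ2.toNNReal (x i)) {x | x 0 ∈ A}
  rw [key]
  -- transfer to the product space
  have hWpi : MeasurableSet {y : Fin d → ℝ | y 0 ∈ A} := (measurable_pi_apply _) hA
  have hpre : {x : EuclideanSpace ℝ (Fin d) | x 0 ∈ A}
      = ⇑(MeasurableEquiv.toLp 2 (Fin d → ℝ)).symm ⁻¹' {y : Fin d → ℝ | y 0 ∈ A} := rfl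
  rw [hpre]
  have htrans : ∫⁻ x in ⇑(MeasurableEquiv.toLp 2 (Fin d → ℝ)).symm ⁻¹'
        {y : Fin d → ℝ | y 0 ∈ A},
        (∏ i, gaussianPDF (m' i) σ2.toNNReal (x i)) ∂volume
      = ∫⁻ y in {y : Fin d → ℝ | y 0 ∈ A},
        (∏ i, gaussianPDF (m' i) σ2.toNNReal (y i)) ∂volume :=
    (EuclideanSpace.volume_preserving_symm_measurableEquiv_toLp
      (Fin d)).setLIntegral_comp_preimage_emb
      (MeasurableEquiv.toLp 2 (Fin d → ℝ)).symm.measurableEmbedding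
      (fun y : Fin d → ℝ => ∏ i, gaussianPDF (m' i) σ2.toNNReal (y i))
      {y : Fin d → ℝ | y 0 ∈ A}
  rw [htrans]
  rw [volume_pi]
  rw [← lintegral_indicator hWpi]
  set f : Fin d → ℝ → ℝ≥0∞ := fun i s =>
    (if i = 0 then A.indicator 1 s else 1) * gaussianPDF (m' i) σ2.toNNReal s with hf
  have hfm : ∀ i, Measurable (f i) := by
    intro i
    refine Measurable.mul ?_ (measurable_gaussianPDF _ _)
    by_cases h : i = 0 <;> simp [h, measurable_one.indicator hA]
  have hptw : ∀ y : Fin d → ℝ,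
      Set.indicator {y : Fin d → ℝ | y 0 ∈ A}
        (fun y => ∏ i, gaussianPDF (m' i) σ2.toNNReal (y i)) y = ∏ i, f i (y i) := by
    intro y
    rw [hf]
    simp only []
    rw [Finset.prod_mul_distrib, Finset.prod_ite_eq' Finset.univ (0 : Fin d)
      (fun i => A.indicator 1 (y i))]
    simp only [Finset.mem_univ, if_true]
    by_cases h : y 0 ∈ A
    · rw [Set.indicator_of_mem h, Set.indicator_of_mem (by exact h)]
      simp
    · rw [Set.indicator_of_notMem h, Set.indicator_of_notMem (by exact h)]
      simp
  rw [lintegral_congr hptw, lintegral_pi_prod f hfm]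
  have hfactor : ∀ i : Fin d, ∫⁻ y, f i y
      = if i = 0 then gaussianReal (m' 0) σ2.toNNReal A else 1 := by
    intro i
    by_cases h : i = 0
    · subst h
      simp only [hf, if_true]
      have : ∀ s : ℝ, A.indicator 1 s * gaussianPDF (m' 0) σ2.toNNReal s
          = A.indicator (gaussianPDF (m' 0) σ2.toNNReal) s := by
        intro s
        by_cases hs : s ∈ A
        · rw [Set.indicator_of_mem hs, Set.indicator_of_mem hs]; simp
        · rw [Set.indicator_of_notMem hs, Set.indicator_of_notMem hs]; simp
      rw [lintegral_congr this, lintegral_indicator hA,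
        ← withDensity_apply _ hA, ← gaussianReal_of_var_ne_zero _ hσ']
    · simp only [hf, h, if_false, one_mul]
      have : (volume.withDensity (gaussianPDF (m' i) σ2.toNNReal)) Set.univ = 1 := by
        rw [← gaussianReal_of_var_ne_zero _ hσ']
        exact measure_univ
      rw [← this, withDensity_apply _ MeasurableSet.univ, Measure.restrict_univ]
  rw [Finset.prod_congr rfl fun i _ => hfactor i,
    Finset.prod_ite_eq' Finset.univ (0 : Fin d)
      (fun _ => gaussianReal (m' 0) σ2.toNNReal A)]
  simp only [Finset.mem_univ, if_true]
  congr 1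
  rw [hm', OrthonormalBasis.repr_apply_apply, hbu]

lemma gaussianE_univ {d : ℕ} {σ2 : ℝ} (hσ2 : 0 < σ2) (m : EuclideanSpace ℝ (Fin d)) :
    gaussianE d m σ2 Set.univ = 1 := by
  rcases Nat.eq_zero_or_pos d with hd | hd
  · subst hd
    haveI : Subsingleton (EuclideanSpace ℝ (Fin 0)) :=
      ⟨fun a b => by ext i; exact i.elim0⟩
    have hdens : (fun x : EuclideanSpace ℝ (Fin 0) =>
        ENNReal.ofReal ((2 * Real.pi * σ2) ^ (-(0 : ℕ) / 2 : ℝ)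
          * Real.exp (-‖x - m‖ ^ 2 / (2 * σ2)))) = fun _ => 1 := by
      funext x
      have h1 : x - m = 0 := Subsingleton.elim _ _
      rw [h1]
      norm_num
    rw [gaussianE]
    rw [show ((-(0:ℕ) : ℝ) / 2) = (-(0:ℕ)/2 : ℝ) from rfl] at hdens
    rw [show (fun x : EuclideanSpace ℝ (Fin 0) =>
        ENNReal.ofReal ((2 * Real.pi * σ2) ^ (-(0:ℕ) / 2 : ℝ)
          * Real.exp (-‖x - m‖ ^ 2 / (2 * σ2)))) = fun _ => 1 from hdens]
    rw [show (fun _ : EuclideanSpace ℝ (Fin 0) => (1:ℝ≥0∞))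
      = (1 : EuclideanSpace ℝ (Fin 0) → ℝ≥0∞) from rfl, withDensity_one]
    have := (EuclideanSpace.volume_preserving_symm_measurableEquiv_toLp (Fin 0)).measure_preimage
      (MeasurableSet.univ (α := Fin 0 → ℝ)).nullMeasurableSet
    simp only [Set.preimage_univ] at this
    rw [this, volume_pi, Measure.pi_univ]
    simp
  · haveI : NeZero d := ⟨hd.ne'⟩
    have hu : ‖(EuclideanSpace.single (0 : Fin d) (1:ℝ))‖ = 1 := by
      rw [EuclideanSpace.norm_single]; norm_num
    have h := gaussianE_proj hσ2 m (EuclideanSpace.single (0 : Fin d) (1:ℝ)) hu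
      (MeasurableSet.univ (α := ℝ))
    simp only [Set.mem_univ, Set.setOf_true] at h
    rw [h]
    exact measure_univ

lemma isProbabilityMeasure_gaussianE {d : ℕ} {σ2 : ℝ} (hσ2 : 0 < σ2)
    (m : EuclideanSpace ℝ (Fin d)) : IsProbabilityMeasure (gaussianE d m σ2) :=
  ⟨gaussianE_univ hσ2 m⟩

lemma gaussianE_translate {d : ℕ} {σ2 : ℝ} (x : EuclideanSpace ℝ (Fin d))
    {S : Set (EuclideanSpace ℝ (Fin d))} (hS : MeasurableSet S) :
    gaussianE d 0 σ2 ((fun z => x + z) ⁻¹' S) = gaussianE d x σ2 S := by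
  have hmp : MeasurePreserving (fun z : EuclideanSpace ℝ (Fin d) => x + z) volume volume :=
    measurePreserving_add_left volume x
  have hemb : MeasurableEmbedding (fun z : EuclideanSpace ℝ (Fin d) => x + z) :=
    (Homeomorph.addLeft x).measurableEmbedding
  rw [gaussianE, gaussianE, withDensity_apply _ hS,
    withDensity_apply _ (hemb.measurable hS)]
  rw [← hmp.setLIntegral_comp_preimage_emb hemb (fun z =>
    ENNReal.ofReal ((2 * Real.pi * σ2) ^ (-(d : ℝ) / 2)
      * Real.exp (-‖z - x‖ ^ 2 / (2 * σ2)))) S]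
  refine setLIntegral_congr_fun (hemb.measurable hS)
    (fun z _ => ?_)
  congr 3
  rw [add_sub_cancel_left, sub_zero]

section Rho

variable {d : ℕ} {σ2 : ℝ}

def rhoE (d : ℕ) (m : EuclideanSpace ℝ (Fin d)) (σ2 : ℝ)
    (z : EuclideanSpace ℝ (Fin d)) : ℝ :=
  (2 * Real.pi * σ2) ^ (-(d : ℝ) / 2) * Real.exp (-‖z - m‖ ^ 2 / (2 * σ2))

lemma rhoE_nonneg (hσ2 : 0 < σ2) (m z : EuclideanSpace ℝ (Fin d)) : 0 ≤ rhoE d m σ2 z := by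
  unfold rhoE
  have : (0:ℝ) < 2 * Real.pi * σ2 := by positivity
  positivity

lemma rhoE_continuous (m : EuclideanSpace ℝ (Fin d)) : Continuous (rhoE d m σ2) := by
  unfold rhoE
  exact continuous_const.mul (Real.continuous_exp.comp
    ((((continuous_id.sub continuous_const).norm.pow 2).neg).div_const _))

lemma gaussianE_eq_ofReal_rhoE (d : ℕ) (m : EuclideanSpace ℝ (Fin d)) (σ2 : ℝ) :
    gaussianE d m σ2 = volume.withDensity fun z => ENNReal.ofReal (rhoE d m σ2 z) := rfl

lemma integrable_rhoE (hσ2 : 0 < σ2) (m : EuclideanSpace ℝ (Fin d)) :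
    Integrable (rhoE d m σ2) volume := by
  refine ⟨(rhoE_continuous m).aestronglyMeasurable, ?_⟩
  rw [hasFiniteIntegral_iff_ofReal (Filter.Eventually.of_forall (rhoE_nonneg hσ2 m))]
  have : ∫⁻ z, ENNReal.ofReal (rhoE d m σ2 z) = gaussianE d m σ2 Set.univ := by
    rw [gaussianE_eq_ofReal_rhoE, withDensity_apply _ MeasurableSet.univ,
      Measure.restrict_univ]
  rw [this, gaussianE_univ hσ2 m]
  exact ENNReal.one_lt_top

lemma gaussianE_toReal (hσ2 : 0 < σ2) (m : EuclideanSpace ℝ (Fin d))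
    {S : Set (EuclideanSpace ℝ (Fin d))} (hS : MeasurableSet S) :
    (gaussianE d m σ2 S).toReal = ∫ z in S, rhoE d m σ2 z ∂volume := by
  rw [gaussianE_eq_ofReal_rhoE, withDensity_apply _ hS,
    ← ofReal_integral_eq_lintegral_ofReal ((integrable_rhoE hσ2 m).restrict)
      (Filter.Eventually.of_forall (rhoE_nonneg hσ2 m)),
    ENNReal.toReal_ofReal]
  exact setIntegral_nonneg hS fun z _ => rhoE_nonneg hσ2 m z

lemma gaussianE_pair_bound {B : ℝ} (hσ2 : 0 < σ2)
    {x y : EuclideanSpace ℝ (Fin d)} (hxy : x ≠ y) (hxyB : ‖x - y‖ ≤ B)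
    {S : Set (EuclideanSpace ℝ (Fin d))} (hS : MeasurableSet S) :
    (gaussianE d x σ2 S).toReal - (gaussianE d y σ2 S).toReal
      ≤ 1 - 2 * gaussQ (B / (2 * Real.sqrt σ2)) := by
  set δ := ‖x - y‖ with hδdef
  have hδ : 0 < δ := by
    rw [hδdef]
    exact norm_sub_pos_iff.mpr hxy
  set u : EuclideanSpace ℝ (Fin d) := δ⁻¹ • (x - y) with hu_def
  have hu : ‖u‖ = 1 := by
    rw [hu_def, norm_smul, norm_inv, Real.norm_eq_abs, abs_of_pos hδ, ← hδdef,
      inv_mul_cancel₀ hδ.ne']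
  set c : ℝ := (inner ℝ u ((2:ℝ)⁻¹ • (x + y))) with hc_def
  set H : Set (EuclideanSpace ℝ (Fin d)) := {z | (inner ℝ u z) ∈ Ici c} with hH_def
  have hH : MeasurableSet H := by
    have : Measurable fun z : EuclideanSpace ℝ (Fin d) => (inner ℝ u z) :=
      (innerSL ℝ u).continuous.measurable
    exact this measurableSet_Ici
  have hself : ∀ w : EuclideanSpace ℝ (Fin d), (inner ℝ w w) = ‖w‖ ^ 2 := fun w =>
    real_inner_self_eq_norm_sq w
  -- membership criterion
  have hmem : ∀ z, z ∈ H ↔ ‖z - x‖ ^ 2 ≤ ‖z - y‖ ^ 2 := by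
    intro z
    rw [hH_def]
    simp only [Set.mem_setOf_eq, Set.mem_Ici]
    have h1 : (inner ℝ u z) = δ⁻¹ * ((inner ℝ x z) - (inner ℝ y z)) := by
      rw [hu_def, real_inner_smul_left, inner_sub_left]
    have h2 : c = δ⁻¹ * (2⁻¹ * (‖x‖ ^ 2 - ‖y‖ ^ 2)) := by
      rw [hc_def, hu_def, real_inner_smul_left, real_inner_smul_right, inner_sub_left,
        inner_add_right, inner_add_right, hself, hself, real_inner_comm y x]
      ring
    rw [h1, h2, norm_sub_sq_real, norm_sub_sq_real, real_inner_comm z x, real_inner_comm z y]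
    rw [mul_le_mul_iff_of_pos_left (inv_pos.mpr hδ)]
    constructor <;> intro <;> nlinarith
  -- density comparison
  have hcomp : ∀ z ∈ H, rhoE d y σ2 z ≤ rhoE d x σ2 z := by
    intro z hz
    unfold rhoE
    have hC : (0:ℝ) ≤ (2 * Real.pi * σ2) ^ (-(d : ℝ) / 2) :=
      Real.rpow_nonneg (by positivity) _
    refine mul_le_mul_of_nonneg_left (Real.exp_le_exp.mpr ?_) hC
    have := (hmem z).mp hz
    have h2σ : (0:ℝ) < 2 * σ2 := by linarith
    exact (div_le_div_iff_of_pos_right h2σ).mpr (neg_le_neg this)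
  have hcomp2 : ∀ z ∉ H, rhoE d x σ2 z ≤ rhoE d y σ2 z := by
    intro z hz
    unfold rhoE
    have hC : (0:ℝ) ≤ (2 * Real.pi * σ2) ^ (-(d : ℝ) / 2) :=
      Real.rpow_nonneg (by positivity) _
    refine mul_le_mul_of_nonneg_left (Real.exp_le_exp.mpr ?_) hC
    have h1 : ¬ (‖z - x‖ ^ 2 ≤ ‖z - y‖ ^ 2) := fun h => hz ((hmem z).mpr h)
    push_neg at h1
    have h2σ : (0:ℝ) < 2 * σ2 := by linarith
    exact (div_le_div_iff_of_pos_right h2σ).mpr (neg_le_neg h1.le)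
  -- integral comparison
  have hIx : Integrable (rhoE d x σ2) volume := integrable_rhoE hσ2 x
  have hIy : Integrable (rhoE d y σ2) volume := integrable_rhoE hσ2 y
  have hstep : ∫ z in S, (rhoE d x σ2 z - rhoE d y σ2 z) ∂volume
      ≤ ∫ z in H, (rhoE d x σ2 z - rhoE d y σ2 z) ∂volume := by
    set f : EuclideanSpace ℝ (Fin d) → ℝ := fun z => rhoE d x σ2 z - rhoE d y σ2 z with hf
    have hIf : Integrable f volume := hIx.sub hIy
    have h1 : ∫ z in S ∩ H, f z ∂volume + ∫ z in S \ H, f z ∂volume = ∫ z in S, f z ∂volume :=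
      integral_inter_add_diff hH hIf.integrableOn
    have h2 : ∫ z in S \ H, f z ∂volume ≤ 0 :=
      setIntegral_nonpos (hS.diff hH) fun z hz => sub_nonpos.mpr (hcomp2 z hz.2)
    have h3 : ∫ z in S ∩ H, f z ∂volume ≤ ∫ z in H, f z ∂volume := by
      refine setIntegral_mono_set hIf.integrableOn ?_
        (HasSubset.Subset.eventuallyLE Set.inter_subset_right)
      exact (ae_restrict_iff' hH).mpr
        (Filter.Eventually.of_forall fun z hz => sub_nonneg.mpr (hcomp z hz))
    linarith
  -- halfspace measures
  have hHx : (gaussianE d x σ2 H).toReal = gaussQ (-(δ / (2 * Real.sqrt σ2))) := by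
    rw [hH_def, gaussianE_proj hσ2 x u hu measurableSet_Ici, gaussianReal_Ici_toReal hσ2]
    congr 1
    have h2 : c = δ⁻¹ * (2⁻¹ * (‖x‖ ^ 2 - ‖y‖ ^ 2)) := by
      rw [hc_def, hu_def, real_inner_smul_left, real_inner_smul_right, inner_sub_left,
        inner_add_right, inner_add_right, hself, hself, real_inner_comm y x]
      ring
    have h3 : (inner ℝ u x) = δ⁻¹ * (‖x‖ ^ 2 - (inner ℝ x y)) := by
      rw [hu_def, real_inner_smul_left, inner_sub_left, hself, real_inner_comm y x]
    have h5 : δ ^ 2 = ‖x‖ ^ 2 - 2 * (inner ℝ x y) + ‖y‖ ^ 2 := norm_sub_sq_real x y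
    have hδne : δ ≠ 0 := hδ.ne'
    have hcx : c - (inner ℝ u x) = -(δ / 2) := by
      have hmul : δ * (c - (inner ℝ u x)) = δ * (-(δ / 2)) := by
        rw [h2, h3]
        simp only [mul_sub, ← mul_assoc, mul_inv_cancel₀ hδne, one_mul]
        nlinarith [h5]
      exact mul_left_cancel₀ hδne hmul
    rw [hcx, neg_div, div_div]
  have hHy : (gaussianE d y σ2 H).toReal = gaussQ (δ / (2 * Real.sqrt σ2)) := by
    rw [hH_def, gaussianE_proj hσ2 y u hu measurableSet_Ici, gaussianReal_Ici_toReal hσ2]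
    congr 1
    have h2 : c = δ⁻¹ * (2⁻¹ * (‖x‖ ^ 2 - ‖y‖ ^ 2)) := by
      rw [hc_def, hu_def, real_inner_smul_left, real_inner_smul_right, inner_sub_left,
        inner_add_right, inner_add_right, hself, hself, real_inner_comm y x]
      ring
    have h4 : (inner ℝ u y) = δ⁻¹ * ((inner ℝ x y) - ‖y‖ ^ 2) := by
      rw [hu_def, real_inner_smul_left, inner_sub_left, hself]
    have h5 : δ ^ 2 = ‖x‖ ^ 2 - 2 * (inner ℝ x y) + ‖y‖ ^ 2 := norm_sub_sq_real x y
    have hδne : δ ≠ 0 := hδ.ne'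
    have hcy : c - (inner ℝ u y) = δ / 2 := by
      have hmul : δ * (c - (inner ℝ u y)) = δ * (δ / 2) := by
        rw [h2, h4]
        simp only [mul_sub, ← mul_assoc, mul_inv_cancel₀ hδne, one_mul]
        nlinarith [h5]
      exact mul_left_cancel₀ hδne hmul
    rw [hcy, div_div]
  -- put together
  have hσr : 0 < Real.sqrt σ2 := Real.sqrt_pos.mpr hσ2
  have e1 : (gaussianE d x σ2 S).toReal - (gaussianE d y σ2 S).toReal
      = ∫ z in S, (rhoE d x σ2 z - rhoE d y σ2 z) ∂volume := by
    rw [gaussianE_toReal hσ2 x hS, gaussianE_toReal hσ2 y hS,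
      integral_sub hIx.integrableOn hIy.integrableOn]
  have e2 : ∫ z in H, (rhoE d x σ2 z - rhoE d y σ2 z) ∂volume
      = (gaussianE d x σ2 H).toReal - (gaussianE d y σ2 H).toReal := by
    rw [gaussianE_toReal hσ2 x hH, gaussianE_toReal hσ2 y hH,
      integral_sub hIx.integrableOn hIy.integrableOn]
  have e3 : (gaussianE d x σ2 H).toReal - (gaussianE d y σ2 H).toReal
      = 1 - 2 * gaussQ (δ / (2 * Real.sqrt σ2)) := by
    rw [hHx, hHy, gaussQ_neg]
    ring
  have e4 : gaussQ (B / (2 * Real.sqrt σ2)) ≤ gaussQ (δ / (2 * Real.sqrt σ2)) := by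
    apply gaussQ_antitone
    have h2σ : (0:ℝ) < 2 * Real.sqrt σ2 := by positivity
    exact (div_le_div_iff_of_pos_right h2σ).mpr hxyB
  linarith [hstep]

end Rho

lemma tvDist_comm {α : Type*} [MeasurableSpace α] (μ ν : Measure α) :
    tvDist μ ν = tvDist ν μ :=
  iSup_congr fun A => abs_sub_comm _ _

section Main

variable {d : ℕ} {σ2 B : ℝ}

lemma measurable_gaussE_set (hσ2 : 0 < σ2) {S : Set (EuclideanSpace ℝ (Fin d))}
    (hS : MeasurableSet S) : Measurable fun x => gaussianE d x σ2 S := by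
  haveI := isProbabilityMeasure_gaussianE hσ2 (0 : EuclideanSpace ℝ (Fin d))
  have heq : (fun x => gaussianE d x σ2 S) = fun x =>
      gaussianE d 0 σ2 (Prod.mk x ⁻¹' {p : EuclideanSpace ℝ (Fin d) ×
        EuclideanSpace ℝ (Fin d) | p.1 + p.2 ∈ S}) := by
    funext x
    rw [show (Prod.mk x ⁻¹' {p : EuclideanSpace ℝ (Fin d) ×
        EuclideanSpace ℝ (Fin d) | p.1 + p.2 ∈ S}) = (fun z => x + z) ⁻¹' S from rfl,
      gaussianE_translate x hS]
  rw [heq]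
  exact measurable_measure_prodMk_left ((measurable_fst.add measurable_snd) hS)

lemma conv_apply_gauss (hσ2 : 0 < σ2) (μ : Measure (EuclideanSpace ℝ (Fin d))) [SFinite μ]
    {S : Set (EuclideanSpace ℝ (Fin d))} (hS : MeasurableSet S) :
    (μ.conv (gaussianE d 0 σ2)) S = ∫⁻ x, gaussianE d x σ2 S ∂μ := by
  haveI := isProbabilityMeasure_gaussianE hσ2 (0 : EuclideanSpace ℝ (Fin d))
  rw [Measure.conv, Measure.map_apply (f := fun p : EuclideanSpace ℝ (Fin d) ×
      EuclideanSpace ℝ (Fin d) => p.1 + p.2) (measurable_fst.add measurable_snd) hS,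
    Measure.prod_apply (s := (fun p : EuclideanSpace ℝ (Fin d) × EuclideanSpace ℝ (Fin d) =>
      p.1 + p.2) ⁻¹' S) ((measurable_fst.add measurable_snd) hS)]
  refine lintegral_congr fun x => ?_
  rw [show (Prod.mk x ⁻¹' ((fun p : EuclideanSpace ℝ (Fin d) × EuclideanSpace ℝ (Fin d) =>
      p.1 + p.2) ⁻¹' S)) = (fun z => x + z) ⁻¹' S from rfl, gaussianE_translate x hS]

lemma conv_contract (hσ2 : 0 < σ2) (hB : 0 < B)
    (μ ν : Measure (EuclideanSpace ℝ (Fin d)))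
    [IsProbabilityMeasure μ] [IsProbabilityMeasure ν]
    (hμ : msupport μ ⊆ Metric.closedBall 0 (B / 2))
    (hν : msupport ν ⊆ Metric.closedBall 0 (B / 2))
    {S : Set (EuclideanSpace ℝ (Fin d))} (hS : MeasurableSet S) :
    ((μ.conv (gaussianE d 0 σ2)) S).toReal - ((ν.conv (gaussianE d 0 σ2)) S).toReal
      ≤ (1 - 2 * gaussQ (B / (2 * Real.sqrt σ2))) * tvDist μ ν := by
  set c₀ : ℝ := 1 - 2 * gaussQ (B / (2 * Real.sqrt σ2)) with hc₀_def
  have hc₀ : 0 ≤ c₀ := by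
    have h1 : gaussQ (B / (2 * Real.sqrt σ2)) ≤ 1 / 2 :=
      gaussQ_le_half (by positivity)
    simp only [hc₀_def]
    linarith
  set K : Set (EuclideanSpace ℝ (Fin d)) := Metric.closedBall 0 (B / 2) with hK_def
  set g : EuclideanSpace ℝ (Fin d) → ℝ := fun x => (gaussianE d x σ2 S).toReal with hg_def
  have hg_meas : Measurable g := (measurable_gaussE_set hσ2 hS).ennreal_toReal
  have hg0 : ∀ x, 0 ≤ g x := fun x => ENNReal.toReal_nonneg
  have hg1 : ∀ x, g x ≤ 1 := by
    intro x
    haveI := isProbabilityMeasure_gaussianE hσ2 x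
    have := prob_le_one (μ := gaussianE d x σ2) (s := S)
    simpa [hg_def] using ENNReal.toReal_mono (by simp) this
  have hosc : ∀ x ∈ K, ∀ y ∈ K, g x - g y ≤ c₀ := by
    intro x hx y hy
    rcases eq_or_ne x y with rfl | hxy
    · simpa using hc₀
    · have hxB : ‖x‖ ≤ B / 2 := by
        simpa [hK_def, mem_closedBall_iff_norm] using hx
      have hyB : ‖y‖ ≤ B / 2 := by
        simpa [hK_def, mem_closedBall_iff_norm] using hy
      have hxyB : ‖x - y‖ ≤ B := le_trans (norm_sub_le x y) (by linarith)
      exact gaussianE_pair_bound hσ2 hxy hxyB hS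
  have hKmem : (0 : EuclideanSpace ℝ (Fin d)) ∈ K :=
    Metric.mem_closedBall_self (by positivity)
  have hKne : (g '' K).Nonempty := ⟨g 0, Set.mem_image_of_mem _ hKmem⟩
  have hbdd : BddBelow (g '' K) := by
    refine ⟨0, ?_⟩
    rintro r ⟨x, _, rfl⟩
    exact hg0 x
  set a : ℝ := sInf (g '' K) with ha_def
  have ha_le : ∀ x ∈ K, a ≤ g x := fun x hx => csInf_le hbdd (Set.mem_image_of_mem g hx)
  have ha_ge : ∀ x ∈ K, g x ≤ a + c₀ := by
    intro x hx
    have : g x - c₀ ≤ a := by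
      refine le_csInf hKne ?_
      rintro r ⟨y, hy, rfl⟩
      linarith [hosc x hx y hy]
    linarith
  set h : EuclideanSpace ℝ (Fin d) → ℝ := fun x => max 0 (min (g x - a) c₀) with hh_def
  have hh_meas : Measurable h :=
    measurable_const.max ((hg_meas.sub measurable_const).min measurable_const)
  have hh0 : ∀ x, 0 ≤ h x := fun x => le_max_left _ _
  have hhc : ∀ x, h x ≤ c₀ := fun x => max_le hc₀ (min_le_right _ _)
  have hhK : ∀ x ∈ K, h x = g x - a := by
    intro x hx
    rw [hh_def]
    simp only
    rw [min_eq_left (by linarith [ha_ge x hx]), max_eq_right (by linarith [ha_le x hx])]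
  -- a.e. membership
  have haeμ : ∀ᵐ x ∂μ, x ∈ K := by
    have h0 : μ Kᶜ = 0 :=
      measure_mono_null (Set.compl_subset_compl.mpr hμ) (measure_msupport_compl μ)
    exact ae_iff.mpr h0
  have haeν : ∀ᵐ x ∂ν, x ∈ K := by
    have h0 : ν Kᶜ = 0 :=
      measure_mono_null (Set.compl_subset_compl.mpr hν) (measure_msupport_compl ν)
    exact ae_iff.mpr h0
  have hhintμ : Integrable h μ := by
    refine Integrable.mono' (integrable_const c₀) hh_meas.aestronglyMeasurable ?_
    exact Filter.Eventually.of_forall fun x => by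
      rw [Real.norm_eq_abs, abs_of_nonneg (hh0 x)]; exact hhc x
  have hhintν : Integrable h ν := by
    refine Integrable.mono' (integrable_const c₀) hh_meas.aestronglyMeasurable ?_
    exact Filter.Eventually.of_forall fun x => by
      rw [Real.norm_eq_abs, abs_of_nonneg (hh0 x)]; exact hhc x
  -- conv values as integrals of g
  have hconvμ : ((μ.conv (gaussianE d 0 σ2)) S).toReal = ∫ x, g x ∂μ := by
    rw [conv_apply_gauss hσ2 μ hS]
    rw [← integral_toReal (measurable_gaussE_set hσ2 hS).aemeasurable
      (Filter.Eventually.of_forall fun x => ?_)]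
    haveI := isProbabilityMeasure_gaussianE hσ2 x
    exact lt_of_le_of_lt (prob_le_one) ENNReal.one_lt_top
  have hconvν : ((ν.conv (gaussianE d 0 σ2)) S).toReal = ∫ x, g x ∂ν := by
    rw [conv_apply_gauss hσ2 ν hS]
    rw [← integral_toReal (measurable_gaussE_set hσ2 hS).aemeasurable
      (Filter.Eventually.of_forall fun x => ?_)]
    haveI := isProbabilityMeasure_gaussianE hσ2 x
    exact lt_of_le_of_lt (prob_le_one) ENNReal.one_lt_top
  -- replace g by h
  have hgμ : ∫ x, g x ∂μ = (∫ x, h x ∂μ) + a := by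
    have hcong : g =ᵐ[μ] fun x => h x + a :=
      haeμ.mono fun x hx => by show g x = h x + a; rw [hhK x hx]; ring
    rw [integral_congr_ae hcong, integral_add hhintμ (integrable_const a), integral_const]
    simp
  have hgν : ∫ x, g x ∂ν = (∫ x, h x ∂ν) + a := by
    have hcong : g =ᵐ[ν] fun x => h x + a :=
      haeν.mono fun x hx => by show g x = h x + a; rw [hhK x hx]; ring
    rw [integral_congr_ae hcong, integral_add hhintν (integrable_const a), integral_const]
    simp
  -- layer cake
  set F : ℝ → ℝ := fun t => (μ {x | t < h x}).toReal with hF_def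
  set G : ℝ → ℝ := fun t => (ν {x | t < h x}).toReal with hG_def
  have hlayμ : ∫ x, h x ∂μ = ∫ t in Ioi (0:ℝ), F t :=
    hhintμ.integral_eq_integral_meas_lt (Filter.Eventually.of_forall hh0)
  have hlayν : ∫ x, h x ∂ν = ∫ t in Ioi (0:ℝ), G t :=
    hhintν.integral_eq_integral_meas_lt (Filter.Eventually.of_forall hh0)
  have hF_meas : Measurable F := by
    refine Antitone.measurable fun s t hst => ?_
    exact ENNReal.toReal_mono (measure_ne_top _ _)
      (measure_mono fun x hx => lt_of_le_of_lt hst hx)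
  have hG_meas : Measurable G := by
    refine Antitone.measurable fun s t hst => ?_
    exact ENNReal.toReal_mono (measure_ne_top _ _)
      (measure_mono fun x hx => lt_of_le_of_lt hst hx)
  have hF1 : ∀ t, F t ≤ 1 := fun t => by
    simpa [hF_def] using ENNReal.toReal_mono (by simp) (prob_le_one (μ := μ))
  have hG1 : ∀ t, G t ≤ 1 := fun t => by
    simpa [hG_def] using ENNReal.toReal_mono (by simp) (prob_le_one (μ := ν))
  have hFzero : ∀ t ∈ Ioi c₀, F t = 0 := by
    intro t ht
    have : {x | t < h x} = ∅ := by
      ext x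
      simp only [Set.mem_setOf_eq, Set.mem_empty_iff_false, iff_false, not_lt]
      exact le_trans (hhc x) (le_of_lt ht)
    simp [hF_def, this]
  have hGzero : ∀ t ∈ Ioi c₀, G t = 0 := by
    intro t ht
    have : {x | t < h x} = ∅ := by
      ext x
      simp only [Set.mem_setOf_eq, Set.mem_empty_iff_false, iff_false, not_lt]
      exact le_trans (hhc x) (le_of_lt ht)
    simp [hG_def, this]
  have hFIoc : IntegrableOn F (Ioc 0 c₀) volume := by
    refine Integrable.mono' ((integrableOn_const_iff (C := (1:ℝ))).mpr (Or.inr measure_Ioc_lt_top))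
      hF_meas.aestronglyMeasurable.restrict ?_
    exact Filter.Eventually.of_forall fun t => by
      rw [Real.norm_eq_abs, abs_of_nonneg ENNReal.toReal_nonneg]; exact hF1 t
  have hGIoc : IntegrableOn G (Ioc 0 c₀) volume := by
    refine Integrable.mono' ((integrableOn_const_iff (C := (1:ℝ))).mpr (Or.inr measure_Ioc_lt_top))
      hG_meas.aestronglyMeasurable.restrict ?_
    exact Filter.Eventually.of_forall fun t => by
      rw [Real.norm_eq_abs, abs_of_nonneg ENNReal.toReal_nonneg]; exact hG1 t
  have hsplitF : ∫ t in Ioi (0:ℝ), F t = ∫ t in Ioc 0 c₀, F t := by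
    rw [← Set.Ioc_union_Ioi_eq_Ioi hc₀]
    rw [setIntegral_union (Set.Ioc_disjoint_Ioi le_rfl) measurableSet_Ioi hFIoc ?_]
    · rw [setIntegral_congr_fun measurableSet_Ioi hFzero]
      simp
    · refine (integrableOn_congr_fun hFzero measurableSet_Ioi).mpr ?_
      simp [integrableOn_const]
  have hsplitG : ∫ t in Ioi (0:ℝ), G t = ∫ t in Ioc 0 c₀, G t := by
    rw [← Set.Ioc_union_Ioi_eq_Ioi hc₀]
    rw [setIntegral_union (Set.Ioc_disjoint_Ioi le_rfl) measurableSet_Ioi hGIoc ?_]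
    · rw [setIntegral_congr_fun measurableSet_Ioi hGzero]
      simp
    · refine (integrableOn_congr_fun hGzero measurableSet_Ioi).mpr ?_
      simp [integrableOn_const]
  -- the comparison
  have hcmp : ∫ t in Ioc 0 c₀, (F t - G t) ≤ ∫ t in Ioc (0:ℝ) c₀, tvDist μ ν := by
    refine setIntegral_mono_on (hFIoc.sub hGIoc)
      ((integrableOn_const_iff (C := tvDist μ ν)).mpr (Or.inr measure_Ioc_lt_top))
      measurableSet_Ioc ?_
    intro t _
    have hmeas : MeasurableSet {x | t < h x} := by
      have : {x | t < h x} = h ⁻¹' Ioi t := rfl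
      rw [this]
      exact hh_meas measurableSet_Ioi
    exact le_tvDist μ ν hmeas
  have hconst : ∫ t in Ioc (0:ℝ) c₀, tvDist μ ν = c₀ * tvDist μ ν := by
    rw [setIntegral_const, measureReal_def, Real.volume_Ioc, smul_eq_mul]
    congr 1
    rw [ENNReal.toReal_ofReal (by linarith)]
    ring
  calc ((μ.conv (gaussianE d 0 σ2)) S).toReal - ((ν.conv (gaussianE d 0 σ2)) S).toReal
      = (∫ x, h x ∂μ) - ∫ x, h x ∂ν := by rw [hconvμ, hconvν, hgμ, hgν]; ring
    _ = (∫ t in Ioc 0 c₀, F t) - ∫ t in Ioc 0 c₀, G t := by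
        rw [hlayμ, hlayν, hsplitF, hsplitG]
    _ = ∫ t in Ioc 0 c₀, (F t - G t) := (integral_sub hFIoc hGIoc).symm
    _ ≤ ∫ t in Ioc (0:ℝ) c₀, tvDist μ ν := hcmp
    _ = c₀ * tvDist μ ν := hconst

end Main

/-- The AdaSDE noise-injection-then-ODE step contracts total variation:
for compactly supported `μ, ν`, `φ = N(0, σ²I_d)` with `σ² = (t+(1+γ)Δt)² − t²`, and any
Borel map `T`, `TV(T_*(μ ∗ φ), T_*(ν ∗ φ)) ≤ (1 − λ(γ))·TV(μ, ν)` where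
`λ(γ) = 2Q(B/(2σ))`. -/
theorem tv_adasde_contract (d : ℕ) (t Δt γ B : ℝ)
    (ht : 0 ≤ t) (hΔt : 0 < Δt) (hγ : γ ∈ Set.Ioo (0 : ℝ) 1) (hB : 0 < B)
    (μ ν : Measure (EuclideanSpace ℝ (Fin d)))
    [IsProbabilityMeasure μ] [IsProbabilityMeasure ν]
    (hμ : msupport μ ⊆ Metric.closedBall 0 (B / 2))
    (hν : msupport ν ⊆ Metric.closedBall 0 (B / 2))
    (T : EuclideanSpace ℝ (Fin d) → EuclideanSpace ℝ (Fin d)) (hT : Measurable T) :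
    tvDist
        ((Measure.conv μ (gaussianE d 0 ((t + (1 + γ) * Δt) ^ 2 - t ^ 2))).map T)
        ((Measure.conv ν (gaussianE d 0 ((t + (1 + γ) * Δt) ^ 2 - t ^ 2))).map T)
      ≤ (1 - 2 * gaussQ (B / (2 * Real.sqrt ((t + (1 + γ) * Δt) ^ 2 - t ^ 2)))) *
          tvDist μ ν := by
  obtain ⟨hγ0, hγ1⟩ := hγ
  set σ2 : ℝ := (t + (1 + γ) * Δt) ^ 2 - t ^ 2 with hσ2_def
  have hσ2 : 0 < σ2 := by
    have h1 : 0 < (1 + γ) * Δt := by positivity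
    nlinarith
  haveI hφ : IsProbabilityMeasure (gaussianE d 0 σ2) :=
    isProbabilityMeasure_gaussianE hσ2 0
  haveI hconvμ : IsProbabilityMeasure (μ.conv (gaussianE d 0 σ2)) := by
    rw [Measure.conv]
    exact Measure.isProbabilityMeasure_map (measurable_fst.add measurable_snd).aemeasurable
  haveI hconvν : IsProbabilityMeasure (ν.conv (gaussianE d 0 σ2)) := by
    rw [Measure.conv]
    exact Measure.isProbabilityMeasure_map (measurable_fst.add measurable_snd).aemeasurable
  haveI : IsProbabilityMeasure ((μ.conv (gaussianE d 0 σ2)).map T) :=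
    Measure.isProbabilityMeasure_map hT.aemeasurable
  haveI : IsProbabilityMeasure ((ν.conv (gaussianE d 0 σ2)).map T) :=
    Measure.isProbabilityMeasure_map hT.aemeasurable
  refine tvDist_le _ _ ?_
  intro A hA
  rw [Measure.map_apply hT hA, Measure.map_apply hT hA]
  rw [abs_sub_le_iff]
  constructor
  · exact conv_contract hσ2 hB μ ν hμ hν (hT hA)
  · rw [tvDist_comm]
    exact conv_contract hσ2 hB ν μ hν hμ (hT hA)
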